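/- Let α₁,…,αₙ be real numbers with ∑ᵢ αᵢ = 0. Then for any real numbers h₁,…,hₙ, |∑ᵢ αᵢ hᵢ| ≤ (∑_{i : αᵢ>0} αᵢ) · (maxᵢ hᵢ − minᵢ hᵢ). -/

import Mathlib

open Finset

theorem zero_sum_weighted_bound (n : ℕ) (hn : 0 < n) (α h : Fin n → ℝ)
    (hsum : ∑ i, α i = 0) :
    |∑ i, α i * h i| ≤
      (∑ i ∈ Finset.univ.filter (fun i => 0 < α i), α i) *
        ((Finset.univ.sup' (Finset.univ_nonempty_iff.mpr (Fin.pos_iff_nonempty.mp hn)) h) -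
         (Finset.univ.inf' (Finset.univ_nonempty_iff.mpr (Fin.pos_iff_nonempty.mp hn)) h)) := by
  set ne := (Finset.univ_nonempty_iff.mpr (Fin.pos_iff_nonempty.mp hn))
  set M := Finset.univ.sup' ne h with hMdef
  set m := Finset.univ.inf' ne h with hmdef
  have hm : ∀ i, m ≤ h i := fun i => inf'_le _ (mem_univ i)
  have hM : ∀ i, h i ≤ M := fun i => le_sup' _ (mem_univ i)
  set s := Finset.univ.filter (fun i => 0 < α i) with hs
  have hsplit : ∑ i, α i * h i = ∑ i ∈ s, α i * h i + ∑ i ∈ sᶜ, α i * h i :=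
    (Finset.sum_add_sum_compl s _).symm
  have hαsplit : ∑ i ∈ s, α i + ∑ i ∈ sᶜ, α i = 0 := by
    rw [Finset.sum_add_sum_compl]; exact hsum
  have hnonpos : ∀ i ∈ sᶜ, α i ≤ 0 := by
    intro i hi
    simp only [hs, Finset.mem_compl, Finset.mem_filter, Finset.mem_univ, true_and] at hi
    linarith [not_lt.mp hi]
  have hA1 : ∑ i ∈ s, α i * m ≤ ∑ i ∈ s, α i * h i :=
    Finset.sum_le_sum fun i hi =>
      mul_le_mul_of_nonneg_left (hm i) (le_of_lt (Finset.mem_filter.mp hi).2)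
  have hA2 : ∑ i ∈ s, α i * h i ≤ ∑ i ∈ s, α i * M :=
    Finset.sum_le_sum fun i hi =>
      mul_le_mul_of_nonneg_left (hM i) (le_of_lt (Finset.mem_filter.mp hi).2)
  have hB1 : ∑ i ∈ sᶜ, α i * M ≤ ∑ i ∈ sᶜ, α i * h i :=
    Finset.sum_le_sum fun i hi => mul_le_mul_of_nonpos_left (hM i) (hnonpos i hi)
  have hB2 : ∑ i ∈ sᶜ, α i * h i ≤ ∑ i ∈ sᶜ, α i * m :=
    Finset.sum_le_sum fun i hi => mul_le_mul_of_nonpos_left (hm i) (hnonpos i hi)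
  rw [← Finset.sum_mul] at hA1 hA2 hB1 hB2
  have hcomp : ∑ i ∈ sᶜ, α i = -∑ i ∈ s, α i := by linarith
  rw [hcomp, neg_mul] at hB1 hB2
  rw [abs_le, hsplit]
  constructor <;> nlinarith [hA1, hA2, hB1, hB2]
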